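/- arXiv:1710.03663 — 3 statements merged into one kernel-verified Lean document; each statement's English description precedes it below -/
import Mathlib

section
/- Let B be a connected bipartite D-regular properly edge-colored graph with 2n vertices (colors {1,...,D}), Ω a pairing, and B^Ω the (D+1)-edge-colored graph obtained by adding a color-0 edge between the two vertices of each pair of Ω. Let Φ₀(B^Ω) = Σ_{i=1}^D Φ_{0,i}(B^Ω) be the total number of bicolored cycles using color 0 and color i. Then Φ₀(B^Ω) = 1 + n(D-1) - L_m(B_{/Ω}), where L_m(B_{/Ω}) = L(B_{/Ω}) - Σ_{i=1}^D L(B_{/Ω}^{(i)}) is the number of independent polychromatic cycles of the contracted graph B_{/Ω}. -/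
/-- The number of cycles (orbits) of a permutation. -/
noncomputable def orbitCount {α : Type} (σ : Equiv.Perm α) : ℕ :=
  Nat.card (Quot fun a b : α => σ a = b)

/-- Adjacency in a bubble encoded by color matchings `m i : A ≃ B` between black
vertices `A` and white vertices `B`: the color-`i` edge joins `b` to `m i b`. -/
def bubbleRel {D : ℕ} {A B : Type} (m : Fin D → A ≃ B) (x y : A ⊕ B) : Prop :=
  ∃ (i : Fin D) (v : A), x = Sum.inl v ∧ y = Sum.inr (m i v)

/-- The bubble encoded by `m` is connected. -/
def BubbleConnected {D : ℕ} {A B : Type} (m : Fin D → A ≃ B) : Prop :=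
  ∀ x y : A ⊕ B, Quot.mk (bubbleRel m) x = Quot.mk (bubbleRel m) y

/-- The color-`i` permutation of the contracted graph `B_{/Ω}`: follow the color-`i`
edge from a black vertex and come back through the pair of `Ω`. -/
def colorPerm {D : ℕ} {A B : Type} (m : Fin D → A ≃ B) (Ω : A ≃ B) (i : Fin D) :
    Equiv.Perm A := (m i).trans Ω.symm

/-- Adjacency of the contracted graph `B_{/Ω}` (all colors together). -/
def contrStep {D : ℕ} {A B : Type} (m : Fin D → A ≃ B) (Ω : A ≃ B) (a b : A) : Prop :=
  ∃ i : Fin D, Ω.symm (m i a) = b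

/-- The 0-score `Φ₀(B^Ω)`: total number of bicolored cycles using color 0, i.e. the
total number of cycles of the color permutations of `B_{/Ω}`. -/
noncomputable def Phi0 {D : ℕ} {A B : Type} (m : Fin D → A ≃ B) (Ω : A ≃ B) : ℕ :=
  ∑ i : Fin D, orbitCount (colorPerm m Ω i)

/-- Circuit rank `L(B_{/Ω}) = E - V + K` of (the underlying undirected graph of) the
contracted graph, which has `card A` vertices and `D·card A` edges. -/
noncomputable def contrRank {D : ℕ} {A B : Type} [Fintype A] (m : Fin D → A ≃ B) (Ω : A ≃ B) : ℤ :=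
  (D * Fintype.card A : ℤ) - (Fintype.card A : ℤ) +
    (Nat.card (Quot (contrStep m Ω)) : ℤ)

/-- Circuit rank of the color-`i` subgraph of `B_{/Ω}` (it has `card A` vertices,
`card A` edges, and its components are the orbits of the color-`i` permutation). -/
noncomputable def colorRank {D : ℕ} {A B : Type} [Fintype A] (m : Fin D → A ≃ B) (Ω : A ≃ B)
    (i : Fin D) : ℤ :=
  (Fintype.card A : ℤ) - (Fintype.card A : ℤ) + (orbitCount (colorPerm m Ω i) : ℤ)

/-- Number of independent polychromatic cycles
`L_m(B_{/Ω}) = L(B_{/Ω}) - Σ_i L(B_{/Ω}^{(i)})`. -/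
noncomputable def polyRank {D : ℕ} {A B : Type} [Fintype A] (m : Fin D → A ≃ B) (Ω : A ≃ B) : ℤ :=
  contrRank m Ω - ∑ i : Fin D, colorRank m Ω i


lemma contr_conn {D : ℕ} {A B : Type} (m : Fin D → A ≃ B) (Ω : A ≃ B)
    (h : BubbleConnected m) (a b : A) :
    Quot.mk (contrStep m Ω) a = Quot.mk (contrStep m Ω) b := by
  let g : A ⊕ B → Quot (contrStep m Ω) :=
    Sum.elim (Quot.mk _) (fun w => Quot.mk _ (Ω.symm w))
  have hg : ∀ x y, bubbleRel m x y → g x = g y := by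
    rintro x y ⟨i, v, rfl, rfl⟩
    exact Quot.sound ⟨i, rfl⟩
  have := congrArg (Quot.lift g hg) (h (Sum.inl a) (Sum.inl b))
  simpa [g] using this

/-- For a connected bipartite D-regular properly edge-colored graph B
with 2n vertices and a pairing Ω, the 0-score of the covering B^Ω satisfies
Φ₀(B^Ω) = 1 + n(D-1) - L_m(B_{/Ω}). -/
theorem phi0_eq_of_pairing (D n : ℕ) (hn : 0 < n) (Black White : Type)
    [Fintype Black] [Fintype White]
    (m : Fin D → Black ≃ White) (hconn : BubbleConnected m)
    (hB : Fintype.card Black = n) (hW : Fintype.card White = n)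
    (Ω : Black ≃ White) :
    (Phi0 m Ω : ℤ) = 1 + (n : ℤ) * ((D : ℤ) - 1) - polyRank m Ω := by
  have hA : Nonempty Black := by
    rw [← Fintype.card_pos_iff, hB]; exact hn
  have hK : Nat.card (Quot (contrStep m Ω)) = 1 := by
    rw [Nat.card_eq_one_iff_unique]
    refine ⟨⟨fun x y => ?_⟩, ⟨Quot.mk _ hA.some⟩⟩
    obtain ⟨a, rfl⟩ := Quot.exists_rep x
    obtain ⟨b, rfl⟩ := Quot.exists_rep y
    exact contr_conn m Ω hconn a b
  simp only [polyRank, contrRank, colorRank, Phi0, hK, hB, Nat.cast_sum, Nat.cast_one]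
  ring_nf
end

section
/- With the notation above, Φ₀(B^Ω) ≤ 1 + n(D-1) for every pairing Ω of B, with equality if and only if L_m(B_{/Ω}) = 0, i.e., if and only if every cycle of B_{/Ω} is monochromatic. -/

lemma quot_mk_perm_eq_iff {α : Type} [Finite α] (σ : Equiv.Perm α) (a b : α) :
    Quot.mk (fun a b : α => σ a = b) a = Quot.mk (fun a b : α => σ a = b) b ↔ σ.SameCycle a b := by
  constructor
  · intro h
    have hg := Quot.eqvGen_exact h
    clear h
    induction hg with
    | rel x y h => exact ⟨1, by simpa using h⟩
    | refl x => exact Equiv.Perm.SameCycle.refl _ _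
    | symm x y _ ih => exact ih.symm
    | trans x y z _ _ ih1 ih2 => exact ih1.trans ih2
  · intro h
    obtain ⟨k, -, hk⟩ := h.exists_pow_eq'
    subst hk
    clear h
    induction k with
    | zero => simp
    | succ k ih =>
      have h2 : (σ ^ (k + 1)) a = σ ((σ ^ k) a) := by
        rw [pow_succ']; rfl
      rw [h2]
      exact ih.trans (Quot.sound rfl)

lemma orbitCount_eq_leaders {α : Type} [Fintype α] (σ : Equiv.Perm α) (key : α → ℕ)
    (hkey : Function.Injective key) :
    orbitCount σ = Nat.card {a : α // ∀ b, σ.SameCycle a b → key a ≤ key b} := by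
  classical
  rw [orbitCount]
  refine (Nat.card_eq_of_bijective (fun x => Quot.mk _ x.val) ⟨?_, ?_⟩).symm
  · rintro ⟨x, hx⟩ ⟨y, hy⟩ h
    simp only at h
    rw [quot_mk_perm_eq_iff] at h
    exact Subtype.ext (hkey (le_antisymm (hx _ h) (hy _ h.symm)))
  · refine Quot.ind (fun a => ?_)
    set s : Finset α := Finset.univ.filter (fun b => σ.SameCycle a b) with hs
    have hne : s.Nonempty := ⟨a, by simp only [hs, Finset.mem_filter, Finset.mem_univ, true_and]; exact Equiv.Perm.SameCycle.refl _ _⟩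
    obtain ⟨b, hb, hmin⟩ := Finset.exists_min_image s key hne
    have hab : σ.SameCycle a b := by simpa [hs] using hb
    refine ⟨⟨b, fun c hc => hmin c ?_⟩, ?_⟩
    · simp only [hs, Finset.mem_filter, Finset.mem_univ, true_and]
      exact hab.trans hc
    · exact (quot_mk_perm_eq_iff σ b a).mpr hab.symm
/-- For every pairing Ω of a connected bipartite D-regular properly
edge-colored graph with 2n vertices, Φ₀(B^Ω) ≤ 1 + n(D-1), with equality if and only if
L_m(B_{/Ω}) = 0, i.e. every cycle of B_{/Ω} is monochromatic. -/
theorem phi0_le_of_pairing (D n : ℕ) (hn : 0 < n) (Black White : Type)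
    [Fintype Black] [Fintype White]
    (m : Fin D → Black ≃ White) (hconn : BubbleConnected m)
    (hB : Fintype.card Black = n) (hW : Fintype.card White = n) :
    ∀ Ω : Black ≃ White,
      (Phi0 m Ω : ℤ) ≤ 1 + (n : ℤ) * ((D : ℤ) - 1) ∧
      ((Phi0 m Ω : ℤ) = 1 + (n : ℤ) * ((D : ℤ) - 1) ↔ polyRank m Ω = 0) := by
  intro Ω
  classical
  have hBlack : Nonempty Black := by
    rw [← Fintype.card_pos_iff, hB]; exact hn
  obtain ⟨a₀⟩ := hBlack
  set σ : Fin D → Equiv.Perm Black := colorPerm m Ω with hσ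
  -- the contracted graph is connected (at the Quot level)
  have hAB : ∀ a b : Black, Quot.mk (contrStep m Ω) a = Quot.mk (contrStep m Ω) b := by
    intro a b
    let f : Black ⊕ White → Quot (contrStep m Ω) := fun x =>
      match x with
      | Sum.inl a => Quot.mk (contrStep m Ω) a
      | Sum.inr w => Quot.mk (contrStep m Ω) (Ω.symm w)
    have hresp : ∀ x y, bubbleRel m x y → f x = f y := by
      rintro x y ⟨i, v, rfl, rfl⟩
      exact Quot.sound ⟨i, rfl⟩
    exact congrArg (Quot.lift f hresp) (hconn (Sum.inl a) (Sum.inl b))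
  have hK : Nat.card (Quot (contrStep m Ω)) = 1 := by
    rw [Nat.card_eq_one_iff_unique]
    refine ⟨⟨fun x y => ?_⟩, ⟨Quot.mk _ a₀⟩⟩
    induction x using Quot.ind with | _ a =>
    induction y using Quot.ind with | _ b =>
    exact hAB a b
  -- the contracted graph as a simple graph
  let G : SimpleGraph Black :=
    { Adj := fun a b => a ≠ b ∧ ∃ i, σ i a = b ∨ σ i b = a
      symm := ⟨by rintro a b ⟨hne, i, h⟩; exact ⟨hne.symm, i, h.symm⟩⟩
      loopless := ⟨fun a h => h.1 rfl⟩ }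
  have hGconn : G.Connected := by
    rw [SimpleGraph.connected_iff]
    refine ⟨fun a b => ?_, ⟨a₀⟩⟩
    have h := Quot.eqvGen_exact (hAB a b)
    induction h with
    | rel x y hxy =>
      obtain ⟨i, hi⟩ := hxy
      by_cases hxy : x = y
      · exact hxy ▸ SimpleGraph.Reachable.refl x
      · exact SimpleGraph.Adj.reachable ⟨hxy, i, Or.inl hi⟩
    | refl x => exact SimpleGraph.Reachable.refl x
    | symm x y _ ih => exact ih.symm
    | trans x y z _ _ ih1 ih2 => exact ih1.trans ih2
  -- a BFS-compatible injective key
  let e := Fintype.equivFin Black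
  let key : Black → ℕ := fun a => (e a : ℕ) + n * G.dist a₀ a
  have hkelt : ∀ a : Black, (e a : ℕ) < n := by
    intro a; exact lt_of_lt_of_eq (e a).2 hB
  have hkeyinj : Function.Injective key := by
    intro a b h
    have ha := hkelt a
    have hb := hkelt b
    have hmod : (e a : ℕ) = (e b : ℕ) := by
      have h2 := congrArg (· % n) h
      simpa [key, Nat.add_mul_mod_self_left, Nat.mod_eq_of_lt, ha, hb] using h2
    exact e.injective (Fin.ext hmod)
  have hkeymono : ∀ a b, G.dist a₀ b < G.dist a₀ a → key b < key a := by
    intro a b hlt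
    calc key b = (e b : ℕ) + n * G.dist a₀ b := rfl
      _ < n + n * G.dist a₀ b := by have := hkelt b; omega
      _ = n * (G.dist a₀ b + 1) := by ring
      _ ≤ n * G.dist a₀ a := Nat.mul_le_mul_left _ hlt
      _ ≤ key a := Nat.le_add_left _ _
  -- every vertex other than a₀ has a same-cycle neighbour of smaller key
  have hnb : ∀ a, a ≠ a₀ → ∃ i, ∃ b, (σ i).SameCycle a b ∧ key b < key a := by
    intro a ha
    have hd : G.dist a₀ a ≠ 0 := by
      have := hGconn.pos_dist_of_ne (Ne.symm ha)
      omega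
    obtain ⟨p, hp⟩ := SimpleGraph.exists_walk_of_dist_ne_zero hd
    cases hq : p.reverse with
    | nil => exact absurd rfl ha
    | @cons _ c _ hadj q =>
      have hlen : q.length + 1 = G.dist a₀ a := by
        have h2 := congrArg SimpleGraph.Walk.length hq
        rw [SimpleGraph.Walk.length_reverse, hp] at h2
        simpa using h2.symm
      have hdistc : G.dist a₀ c < G.dist a₀ a := by
        have h1 : G.dist a₀ c ≤ q.reverse.length := SimpleGraph.dist_le _
        rw [SimpleGraph.Walk.length_reverse] at h1
        omega
      obtain ⟨hne, i, hor⟩ := hadj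
      refine ⟨i, c, ?_, hkeymono a c hdistc⟩
      cases hor with
      | inl h => exact ⟨1, by simpa using h⟩
      | inr h => exact Equiv.Perm.SameCycle.symm ⟨1, by simpa using h⟩
  -- leaders
  let Leader : Fin D → Black → Prop := fun i a => ∀ b, (σ i).SameCycle a b → key a ≤ key b
  have hc : ∀ i, orbitCount (σ i) = Nat.card {a // Leader i a} := fun i =>
    orbitCount_eq_leaders (σ i) key hkeyinj
  have hle : ∀ i, Nat.card {a // Leader i a} ≤ n := by
    intro i; rw [Nat.card_eq_fintype_card, ← hB]; exact Fintype.card_subtype_le _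
  have hcompl : ∀ i : Fin D, Nat.card {a // ¬ Leader i a} = n - Nat.card {a // Leader i a} := by
    intro i
    rw [Nat.card_eq_fintype_card, Nat.card_eq_fintype_card, Fintype.card_subtype_compl, hB]
  -- the injection from Black \ {a₀}
  have hinj : (n - 1 : ℕ) ≤ ∑ i : Fin D, Nat.card {a // ¬ Leader i a} := by
    have hcard : Nat.card {a : Black // a ≠ a₀} = n - 1 := by
      rw [Nat.card_eq_fintype_card, Fintype.card_subtype_compl, Fintype.card_subtype_eq, hB]
    have hex : ∀ a : {a : Black // a ≠ a₀}, ∃ i : Fin D, ¬ Leader i a.val := by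
      intro a
      obtain ⟨i, b, hsc, hkb⟩ := hnb a.val a.prop
      exact ⟨i, fun hL => absurd (hL b hsc) (not_le.mpr hkb)⟩
    choose F hF using hex
    let g : {a : Black // a ≠ a₀} → Σ i : Fin D, {a // ¬ Leader i a} :=
      fun a => ⟨F a, ⟨a.val, hF a⟩⟩
    have hginj : Function.Injective g := by
      intro x y h
      have h2 := congrArg (fun z : Σ i : Fin D, {a // ¬ Leader i a} => z.2.val) h
      exact Subtype.ext h2
    have h3 := Nat.card_le_card_of_injective g hginj
    rw [hcard] at h3
    refine h3.trans (le_of_eq ?_)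
    rw [Nat.card_eq_fintype_card, Fintype.card_sigma]
    simp [Nat.card_eq_fintype_card]
  -- arithmetic
  set l : Fin D → ℕ := fun i => Nat.card {a // Leader i a} with hl
  have hsum : ((n : ℤ) - 1) ≤ (D : ℤ) * n - ∑ i : Fin D, (l i : ℤ) := by
    have h1 : ((n - 1 : ℕ) : ℤ) ≤ ((∑ i : Fin D, Nat.card {a // ¬ Leader i a} : ℕ) : ℤ) := by
      exact_mod_cast hinj
    have h2 : ((n - 1 : ℕ) : ℤ) = (n : ℤ) - 1 := by
      have := hn; push_cast [Nat.cast_sub hn]; ring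
    have h3 : ((∑ i : Fin D, Nat.card {a // ¬ Leader i a} : ℕ) : ℤ)
        = (D : ℤ) * n - ∑ i : Fin D, (l i : ℤ) := by
      rw [Nat.cast_sum]
      have hterm : ∀ i ∈ Finset.univ, ((Nat.card {a // ¬ Leader i a} : ℕ) : ℤ)
          = (n : ℤ) - (l i : ℤ) := by
        intro i _
        rw [hcompl i, Nat.cast_sub (hle i)]
      rw [Finset.sum_congr rfl hterm, Finset.sum_sub_distrib, Finset.sum_const,
        Finset.card_univ, Fintype.card_fin, nsmul_eq_mul]
    rw [h2, h3] at h1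
    exact h1
  have hPhi : (Phi0 m Ω : ℤ) = ∑ i : Fin D, (l i : ℤ) := by
    rw [Phi0]
    push_cast
    exact Finset.sum_congr rfl fun i _ => by rw [← hσ, hc i]
  have hpoly : polyRank m Ω = (D : ℤ) * n - n + 1 - ∑ i : Fin D, (l i : ℤ) := by
    rw [polyRank, contrRank, hK, hB]
    have : ∀ i : Fin D, colorRank m Ω i = (l i : ℤ) := by
      intro i
      rw [colorRank, ← hσ, hc i]
      ring
    rw [Finset.sum_congr rfl fun i _ => this i]
    push_cast
    ring
  have hring : 1 + (n : ℤ) * ((D : ℤ) - 1) = (D : ℤ) * n - n + 1 := by ring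
  constructor
  · rw [hPhi, hring]; linarith
  · rw [hPhi, hring, hpoly]
    constructor <;> intro h <;> linarith
end

section
/- Let B be a connected bipartite D-regular properly D-edge-colored graph containing an h-pair π (a black vertex and a white vertex joined by exactly h parallel edges) with h > D/2. Then every optimal pairing of B contains π, where a pairing Ω is optimal if it maximizes Φ₀(B^Ω) over all pairings. -/
section Aux

open Relation

variable {α : Type} [Finite α] [DecidableEq α]

/-- counting: a surjection with a doubled fiber loses at least one. -/
lemma card_succ_le_of_surj {X Y : Type} [Finite X] (f : X → Y) (hf : Function.Surjective f)
    (p q : X) (hpq : p ≠ q) (hfpq : f p = f q) : Nat.card Y + 1 ≤ Nat.card X := by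
  classical
  have hsurj : Function.Surjective (fun z : {z : X // z ≠ q} => f z.1) := by
    intro y
    obtain ⟨x, hx⟩ := hf y
    by_cases hxq : x = q
    · exact ⟨⟨p, hpq⟩, by show f p = y; rw [hfpq, ← hxq, hx]⟩
    · exact ⟨⟨x, hxq⟩, hx⟩
  have h1 : Nat.card Y ≤ Nat.card {z : X // z ≠ q} :=
    Nat.card_le_card_of_surjective _ hsurj
  have h2 : Nat.card {z : X // z = q} + Nat.card {z : X // z ≠ q} = Nat.card X := by
    rw [← Nat.card_sum]
    exact Nat.card_congr (Equiv.sumCompl (fun z : X => z = q))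
  have h3 : Nat.card {z : X // z = q} = 1 := by
    haveI : Unique {z : X // z = q} := ⟨⟨⟨q, rfl⟩⟩, fun z => Subtype.ext z.2⟩
    exact Nat.card_unique
  omega

lemma orbitCount_mul_swap_le (σ : Equiv.Perm α) (x y : α)
    (π : Equiv.Perm α) (hπ : ∀ a, π a = Equiv.swap x y (σ a)) :
    orbitCount π ≤ orbitCount σ + 1 := by
  classical
  set rσ : α → α → Prop := fun a b => σ a = b with hrσ
  set rπ : α → α → Prop := fun a b => π a = b with hrπ
  have mkπ : ∀ a : α, Quot.mk rπ a = Quot.mk rπ (π a) := fun a => Quot.sound rfl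
  let s : Quot rπ → Quot rπ := fun q => if q = Quot.mk rπ y then Quot.mk rπ x else q
  have hsx : s (Quot.mk rπ x) = Quot.mk rπ x := by
    by_cases hx : Quot.mk rπ x = Quot.mk rπ y <;> simp [s, hx]
  have hg : ∀ a b, rσ a b → s (Quot.mk rπ a) = s (Quot.mk rπ b) := by
    intro a b hab
    have hb : b = Equiv.swap x y (π a) := by
      rw [hπ a, Equiv.swap_apply_self, hab]
    by_cases h1 : π a = x
    · rw [h1, Equiv.swap_apply_left] at hb
      rw [mkπ a, h1, hb]
      simp [s, hsx]
    · by_cases h2 : π a = y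
      · rw [h2, Equiv.swap_apply_right] at hb
        rw [mkπ a, h2, hb]
        simp [s, hsx]
      · rw [Equiv.swap_apply_of_ne_of_ne h1 h2] at hb
        rw [mkπ a, hb]
  let g : Quot rσ → Quot rπ := Quot.lift (fun a => s (Quot.mk rπ a)) hg
  have hsurj : Function.Surjective (Sum.elim g (fun _ : Unit => Quot.mk rπ y)) := by
    intro c
    induction c using Quot.ind with
    | _ a =>
      by_cases ha : Quot.mk rπ a = Quot.mk rπ y
      · exact ⟨Sum.inr (), by simp [ha]⟩
      · exact ⟨Sum.inl (Quot.mk rσ a), by simp [g, s, ha]⟩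
  have := Nat.card_le_card_of_surjective _ hsurj
  calc orbitCount π = Nat.card (Quot rπ) := rfl
    _ ≤ Nat.card (Quot rσ ⊕ Unit) := this
    _ = orbitCount σ + 1 := by rw [Nat.card_sum]; simp [orbitCount]; rfl

lemma orbitCount_mul_swap_ge (σ : Equiv.Perm α) (x y : α) (hxy : x ≠ y) (hσ : σ x = y)
    (π : Equiv.Perm α) (hπ : ∀ a, π a = Equiv.swap x y (σ a)) :
    orbitCount σ + 1 ≤ orbitCount π := by
  classical
  set rσ : α → α → Prop := fun a b => σ a = b with hrσ
  set rπ : α → α → Prop := fun a b => π a = b with hrπ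
  have mkσ : ∀ a : α, Quot.mk rσ a = Quot.mk rσ (σ a) := fun a => Quot.sound rfl
  have hxyσ : Quot.mk rσ x = Quot.mk rσ y := by rw [mkσ x, hσ]
  have hF : ∀ a b, rπ a b → Quot.mk rσ a = Quot.mk rσ b := by
    intro a b hab
    have hb : b = Equiv.swap x y (σ a) := by rw [← hπ a, hab]
    by_cases h1 : σ a = x
    · rw [h1, Equiv.swap_apply_left] at hb
      rw [mkσ a, h1, hb, hxyσ]
    · by_cases h2 : σ a = y
      · rw [h2, Equiv.swap_apply_right] at hb
        rw [mkσ a, h2, hb, hxyσ]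
      · rw [Equiv.swap_apply_of_ne_of_ne h1 h2] at hb
        rw [mkσ a, hb]
  let F : Quot rπ → Quot rσ := Quot.lift (Quot.mk rσ) hF
  have hFsurj : Function.Surjective F := by
    intro c
    induction c using Quot.ind with
    | _ a => exact ⟨Quot.mk rπ a, rfl⟩
  have hπx : π x = x := by rw [hπ x, hσ, Equiv.swap_apply_right]
  -- the class of x under rπ is a singleton
  have hfix : ∀ a b, EqvGen rπ a b → (a = x ↔ b = x) := by
    intro a b hab
    induction hab with
    | rel u v huv =>
      constructor
      · intro h; rw [← huv, h, hπx]
      · intro h; exact π.injective (by rw [huv, h, hπx])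
    | refl u => exact Iff.rfl
    | symm u v _ ih => exact ih.symm
    | trans u v w _ _ ih1 ih2 => exact ih1.trans ih2
  have hne : Quot.mk rπ x ≠ Quot.mk rπ y := by
    intro h
    exact hxy (((hfix x y) (Quot.eqvGen_exact h)).mp rfl).symm
  have hFeq : F (Quot.mk rπ x) = F (Quot.mk rπ y) := hxyσ
  exact card_succ_le_of_surj F hFsurj _ _ hne hFeq

end Aux


/-- If a connected bipartite D-regular properly edge-colored graph B
contains an h-pair (a black vertex b₀ and a white vertex w₀ joined by exactly h parallel
edges) with h > D/2, then every pairing maximizing the 0-score Φ₀(B^Ω) pairs b₀ with w₀. -/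
theorem hpair_mem_optimal_pairing (D h : ℕ) (hh : D < 2 * h)
    (Black White : Type) [Fintype Black] [Fintype White]
    (m : Fin D → Black ≃ White) (hconn : BubbleConnected m)
    (b₀ : Black) (w₀ : White)
    (hpair : Nat.card {i : Fin D // m i b₀ = w₀} = h)
    (Ω : Black ≃ White)
    (hopt : ∀ Ω' : Black ≃ White, Phi0 m Ω' ≤ Phi0 m Ω) :
    Ω b₀ = w₀ := by
  classical
  by_contra hne
  set a₁ : Black := Ω.symm w₀ with ha₁
  have hb : b₀ ≠ a₁ := by
    intro hcontra
    exact hne (by rw [hcontra, ha₁, Equiv.apply_symm_apply])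
  set Ω' : Black ≃ White := Ω.trans (Equiv.swap (Ω b₀) w₀) with hΩ'
  have key : ∀ (i : Fin D) (a : Black),
      colorPerm m Ω' i a = Equiv.swap b₀ a₁ (colorPerm m Ω i a) := by
    intro i a
    show Ω'.symm (m i a) = Equiv.swap b₀ a₁ (Ω.symm (m i a))
    rw [hΩ']
    simp only [Equiv.symm_trans_apply, Equiv.symm_swap]
    by_cases h1 : m i a = Ω b₀
    · rw [h1, Equiv.swap_apply_left, Equiv.symm_apply_apply, ← ha₁,
        Equiv.swap_apply_left]
    · by_cases h2 : m i a = w₀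
      · rw [h2, Equiv.swap_apply_right, Equiv.symm_apply_apply, ← ha₁,
          Equiv.swap_apply_right]
      · rw [Equiv.swap_apply_of_ne_of_ne h1 h2,
          Equiv.swap_apply_of_ne_of_ne
            (fun hc => h1 (by rw [← hc]; exact (Equiv.apply_symm_apply Ω _).symm))
            (fun hc => h2 (Ω.symm.injective (hc.trans ha₁)))]
  have hgeS : ∀ i : Fin D, m i b₀ = w₀ →
      (orbitCount (colorPerm m Ω i) : ℤ) + 1 ≤ orbitCount (colorPerm m Ω' i) := by
    intro i hi
    have hσ : colorPerm m Ω i b₀ = a₁ := by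
      show Ω.symm (m i b₀) = a₁
      rw [hi, ha₁]
    exact_mod_cast orbitCount_mul_swap_ge (colorPerm m Ω i) b₀ a₁ hb hσ _ (key i)
  have hle : ∀ i : Fin D,
      (orbitCount (colorPerm m Ω i) : ℤ) ≤ (orbitCount (colorPerm m Ω' i) : ℤ) + 1 := by
    intro i
    have := orbitCount_mul_swap_le (colorPerm m Ω' i) b₀ a₁ (colorPerm m Ω i)
      (fun a => by rw [key i a, Equiv.swap_apply_self])
    exact_mod_cast this
  have hScard : (Finset.univ.filter fun i : Fin D => m i b₀ = w₀).card = h := by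
    rw [← hpair, Nat.card_eq_fintype_card, Fintype.card_subtype]
  have hsum : ∑ i : Fin D, ((orbitCount (colorPerm m Ω i) : ℤ)
      + if m i b₀ = w₀ then 1 else -1) ≤ ∑ i : Fin D, (orbitCount (colorPerm m Ω' i) : ℤ) := by
    apply Finset.sum_le_sum
    intro i _
    split_ifs with hi
    · exact hgeS i hi
    · linarith [hle i]
  have hδ : ∑ i : Fin D, (if m i b₀ = w₀ then (1:ℤ) else -1) = 2 * h - D := by
    have : ∀ i : Fin D, (if m i b₀ = w₀ then (1:ℤ) else -1)
        = (if m i b₀ = w₀ then (2:ℤ) else 0) - 1 := by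
      intro i; split_ifs <;> norm_num
    rw [Finset.sum_congr rfl (fun i _ => this i), Finset.sum_sub_distrib,
      ← Finset.sum_filter, Finset.sum_const, hScard, Finset.sum_const, Finset.card_univ,
      Fintype.card_fin]
    simp [nsmul_eq_mul]
    ring
  rw [Finset.sum_add_distrib, hδ] at hsum
  have hcast1 : (Phi0 m Ω : ℤ) = ∑ i : Fin D, (orbitCount (colorPerm m Ω i) : ℤ) := by
    simp [Phi0]
  have hcast2 : (Phi0 m Ω' : ℤ) = ∑ i : Fin D, (orbitCount (colorPerm m Ω' i) : ℤ) := by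
    simp [Phi0]
  have h2 : (Phi0 m Ω' : ℤ) ≤ (Phi0 m Ω : ℤ) := by exact_mod_cast hopt Ω'
  have hD : (D : ℤ) < 2 * h := by exact_mod_cast hh
  rw [← hcast1, ← hcast2] at hsum
  linarith
end
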